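/- The spine of a finite extremal lattice L (the set of elements lying on some maximal-length chain) is a sublattice of L, closed under meet and join, and is a distributive lattice isomorphic to the lattice of order ideals of the Galois poset P(L). -/

import Mathlib

/-- An element `x` of a lattice is *left modular* if `(y ⊔ x) ⊓ z = y ⊔ (x ⊓ z)`
for all `y ≤ z`. -/
def LeftModular {L : Type*} [Lattice L] (x : L) : Prop :=
  ∀ y z : L, y ≤ z → (y ⊔ x) ⊓ z = y ⊔ (x ⊓ z)

/-- The data of an extremal lattice of length `n` together with a fixed
maximal-length chain `x₀ ⋖ ⋯ ⋖ xₙ` and the induced numberings of the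
join-irreducibles `j₁, …, jₙ` and meet-irreducibles `m₁, …, mₙ`. -/
structure ExtremalChainData (L : Type*) [Lattice L] [Fintype L] [BoundedOrder L]
    (n : ℕ) where
  x : Fin (n + 1) → L
  x_strictMono : StrictMono x
  x_bot : x 0 = ⊥
  x_top : x (Fin.last n) = ⊤
  maxlen : ∀ (m : ℕ) (c : Fin (m + 1) → L), StrictMono c → m ≤ n
  j : Fin n → L
  m : Fin n → L
  j_irr : ∀ i, SupIrred (j i)
  m_irr : ∀ i, InfIrred (m i)
  j_inj : Function.Injective j
  m_inj : Function.Injective m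
  j_surj : ∀ a : L, SupIrred a → a ∈ Set.range j
  m_surj : ∀ a : L, InfIrred a → a ∈ Set.range m
  x_eq_sup : ∀ i : Fin (n + 1),
    x i = (Finset.univ.filter fun k : Fin n => (k : ℕ) < (i : ℕ)).sup j
  x_eq_inf : ∀ i : Fin (n + 1),
    x i = (Finset.univ.filter fun k : Fin n => (i : ℕ) ≤ (k : ℕ)).inf m

namespace ExtremalChainData

variable {L : Type*} [Lattice L] [Fintype L] [BoundedOrder L] {n : ℕ}

/-- `x_J`: the set of indices of join-irreducibles lying below `a`. -/
def setJ (D : ExtremalChainData L n) (a : L) : Set (Fin n) := {i | D.j i ≤ a}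

/-- `x_M`: the set of indices of meet-irreducibles lying above `a`. -/
def setM (D : ExtremalChainData L n) (a : L) : Set (Fin n) := {i | a ≤ D.m i}

/-- The Galois graph: a directed edge `i → k` when `jᵢ ≰ m_k` and `i ≠ k`. -/
def galoisEdge (D : ExtremalChainData L n) (i k : Fin n) : Prop :=
  ¬ D.j i ≤ D.m k ∧ i ≠ k

/-- The left modular labelling: `i` is the label of the cover `y ⋖ z` iff `i` is
minimal with `y ⊔ (xᵢ ⊓ z) = z`. -/
def IsLabel (D : ExtremalChainData L n) (y z : L) (i : Fin n) : Prop :=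
  y ⊔ (D.x i.succ ⊓ z) = z ∧ ∀ k : Fin n, y ⊔ (D.x k.succ ⊓ z) = z → i ≤ k

open scoped Classical in
/-- `D^γ(a)`: the set of labels of cover relations below `a`. -/
noncomputable def downLabels (D : ExtremalChainData L n) (a : L) : Finset (Fin n) :=
  Finset.univ.filter fun i => ∃ y, y ⋖ a ∧ D.IsLabel y a i

open scoped Classical in
/-- `U^γ(a)`: the set of labels of cover relations above `a`. -/
noncomputable def upLabels (D : ExtremalChainData L n) (a : L) : Finset (Fin n) :=
  Finset.univ.filter fun i => ∃ z, a ⋖ z ∧ D.IsLabel a z i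

/-- The fixed chain consists of left modular elements, i.e. the lattice is trim. -/
def IsTrim (D : ExtremalChainData L n) : Prop := ∀ i, LeftModular (D.x i)

end ExtremalChainData

open ExtremalChainData

/-- The spine of a lattice: elements lying on some chain of maximal length. -/
def spine (L : Type*) [Lattice L] [Fintype L] [BoundedOrder L] (n : ℕ) : Set L :=
  {a | ∃ c : Fin (n + 1) → L, StrictMono c ∧ ∃ i, c i = a}

/-- Lower sets of the Galois poset `P(L)`, the transitive closure of the Galois
graph (where `i → k` means `i` is above `k`). -/
def IsGaloisLowerSet {L : Type*} [Lattice L] [Fintype L] [BoundedOrder L] {n : ℕ}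
    (D : ExtremalChainData L n) (S : Set (Fin n)) : Prop :=
  ∀ i ∈ S, ∀ k, Relation.TransGen D.galoisEdge i k → k ∈ S

namespace ExtremalChainData

variable {L : Type*} [Lattice L] [Fintype L] [BoundedOrder L] {n : ℕ}

open Finset
open scoped Classical

noncomputable def Jf (D : ExtremalChainData L n) (a : L) : Finset (Fin n) :=
  univ.filter fun i => D.j i ≤ a

noncomputable def Mf (D : ExtremalChainData L n) (a : L) : Finset (Fin n) :=
  univ.filter fun i => a ≤ D.m i

noncomputable def psi (D : ExtremalChainData L n) (S : Finset (Fin n)) : L := S.sup D.j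

def LowerE (D : ExtremalChainData L n) (S : Finset (Fin n)) : Prop :=
  ∀ i ∈ S, ∀ k, D.galoisEdge i k → k ∈ S

lemma mem_Jf {D : ExtremalChainData L n} {a : L} {i : Fin n} :
    i ∈ D.Jf a ↔ D.j i ≤ a := by simp [Jf]

lemma mem_Mf {D : ExtremalChainData L n} {a : L} {i : Fin n} :
    i ∈ D.Mf a ↔ a ≤ D.m i := by simp [Mf]

lemma psi_Jf (D : ExtremalChainData L n) (a : L) : D.psi (D.Jf a) = a := by
  induction a using WellFoundedLT.induction with
  | _ a ih =>
    refine le_antisymm (Finset.sup_le fun i hi => mem_Jf.1 hi) ?_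
    by_cases hirr : SupIrred a
    · obtain ⟨i, rfl⟩ := D.j_surj a hirr
      exact Finset.le_sup (mem_Jf.2 le_rfl)
    · rw [SupIrred] at hirr
      push_neg at hirr
      by_cases hmin : IsMin a
      · exact le_bot_iff.mp (hmin bot_le) ▸ bot_le
      · obtain ⟨b, c, hbc, hb, hc⟩ := hirr hmin
        have hble : b < a := lt_of_le_of_ne (hbc ▸ le_sup_left) hb
        have hcle : c < a := lt_of_le_of_ne (hbc ▸ le_sup_right) hc
        have hb' := ih b hble
        have hc' := ih c hcle
        calc a = b ⊔ c := hbc.symm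
        _ ≤ D.psi (D.Jf a) := by
            refine sup_le ?_ ?_
            · rw [← hb']; exact Finset.sup_mono fun i hi => mem_Jf.2 ((mem_Jf.1 hi).trans hble.le)
            · rw [← hc']; exact Finset.sup_mono fun i hi => mem_Jf.2 ((mem_Jf.1 hi).trans hcle.le)

lemma inf_Mf (D : ExtremalChainData L n) (a : L) : (D.Mf a).inf D.m = a := by
  induction a using WellFoundedGT.induction with
  | _ a ih =>
    refine le_antisymm ?_ (Finset.le_inf fun i hi => mem_Mf.1 hi)
    by_cases hirr : InfIrred a
    · obtain ⟨i, rfl⟩ := D.m_surj a hirr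
      exact Finset.inf_le (mem_Mf.2 le_rfl)
    · rw [InfIrred] at hirr
      push_neg at hirr
      by_cases hmax : IsMax a
      · exact top_le_iff.mp (hmax le_top) ▸ le_top
      · obtain ⟨b, c, hbc, hb, hc⟩ := hirr hmax
        have hble : a < b := lt_of_le_of_ne (hbc ▸ inf_le_left) (Ne.symm hb)
        have hcle : a < c := lt_of_le_of_ne (hbc ▸ inf_le_right) (Ne.symm hc)
        have hb' := ih b hble
        have hc' := ih c hcle
        calc (D.Mf a).inf D.m ≤ b ⊓ c := by
              refine le_inf ?_ ?_
              · rw [← hb']; exact Finset.inf_mono fun i hi => mem_Mf.2 (hble.le.trans (mem_Mf.1 hi))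
              · rw [← hc']; exact Finset.inf_mono fun i hi => mem_Mf.2 (hcle.le.trans (mem_Mf.1 hi))
        _ = a := hbc

lemma le_iff_Jf {D : ExtremalChainData L n} {a b : L} : a ≤ b ↔ D.Jf a ⊆ D.Jf b := by
  constructor
  · exact fun h i hi => mem_Jf.2 ((mem_Jf.1 hi).trans h)
  · intro h
    calc a = D.psi (D.Jf a) := (D.psi_Jf a).symm
    _ ≤ D.psi (D.Jf b) := Finset.sup_mono h
    _ = b := D.psi_Jf b

lemma j_le_x_succ (D : ExtremalChainData L n) (i : Fin n) : D.j i ≤ D.x i.succ := by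
  rw [D.x_eq_sup]
  exact Finset.le_sup (by simp)

lemma x_castSucc_le_m (D : ExtremalChainData L n) (i : Fin n) :
    D.x i.castSucc ≤ D.m i := by
  rw [D.x_eq_inf]
  exact Finset.inf_le (by simp)

lemma j_le_m_of_lt (D : ExtremalChainData L n) {i k : Fin n} (h : (i : ℕ) < (k : ℕ)) :
    D.j i ≤ D.m k := by
  refine (D.j_le_x_succ i).trans ((D.x_strictMono.monotone ?_).trans (D.x_castSucc_le_m k))
  rw [Fin.le_def]
  simpa using h

lemma j_not_le_m_self (D : ExtremalChainData L n) (i : Fin n) : ¬ D.j i ≤ D.m i := by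
  intro h
  have h1 : D.x i.succ ≤ D.x i.castSucc := by
    rw [D.x_eq_sup i.succ, D.x_eq_inf i.castSucc]
    refine Finset.sup_le fun k hk => Finset.le_inf fun l hl => ?_
    simp only [Finset.mem_filter, Finset.mem_univ, true_and, Fin.val_succ,
      Fin.coe_castSucc] at hk hl
    rcases lt_trichotomy (k : ℕ) (l : ℕ) with h' | h' | h'
    · exact D.j_le_m_of_lt h'
    · have hk' : k = i := Fin.ext (by omega)
      have hl' : l = i := Fin.ext (by omega)
      rw [hk', hl']; exact h
    · omega
  exact absurd (D.x_strictMono (Fin.castSucc_lt_succ : i.castSucc < i.succ)) h1.not_gt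

lemma edge_lt {D : ExtremalChainData L n} {i k : Fin n} (h : D.galoisEdge i k) :
    (k : ℕ) < (i : ℕ) := by
  rcases lt_trichotomy (k : ℕ) (i : ℕ) with h' | h' | h'
  · exact h'
  · exact absurd (Fin.ext h'.symm) h.2
  · exact absurd (D.j_le_m_of_lt h') h.1

lemma disjoint_Jf_Mf (D : ExtremalChainData L n) (a : L) : Disjoint (D.Jf a) (D.Mf a) := by
  rw [Finset.disjoint_left]
  intro i hi hi'
  exact D.j_not_le_m_self i ((mem_Jf.1 hi).trans (mem_Mf.1 hi'))

lemma psi_le_m {D : ExtremalChainData L n} {S : Finset (Fin n)} (hS : D.LowerE S)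
    {k : Fin n} (hk : k ∉ S) : D.psi S ≤ D.m k := by
  refine Finset.sup_le fun i hi => ?_
  by_contra hle
  have hik : i ≠ k := fun h => hk (h ▸ hi)
  exact hk (hS i hi k ⟨hle, hik⟩)

lemma Jf_psi {D : ExtremalChainData L n} {S : Finset (Fin n)} (hS : D.LowerE S) :
    D.Jf (D.psi S) = S := by
  ext k
  rw [mem_Jf]
  constructor
  · intro h
    by_contra hk
    exact D.j_not_le_m_self k (h.trans (psi_le_m hS hk))
  · exact fun h => Finset.le_sup h

lemma psi_strictMonoOn {D : ExtremalChainData L n} {S T : Finset (Fin n)}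
    (hS : D.LowerE S) (hT : D.LowerE T) (h : S ⊂ T) : D.psi S < D.psi T := by
  refine lt_of_le_of_ne (Finset.sup_mono h.subset) fun he => ?_
  exact h.ne (by rw [← Jf_psi hS, ← Jf_psi hT, he])

lemma psi_mem_spine {D : ExtremalChainData L n} {S : Finset (Fin n)}
    (hS : D.LowerE S) : D.psi S ∈ spine L n := by
  classical
  set s := S.card with hs_def
  have hsn : s ≤ n := by simpa using S.card_le_univ
  have hcomp : Sᶜ.card = n - s := by simp [Finset.card_compl, hs_def]
  set eS := S.orderEmbOfFin (rfl : S.card = s) with heS_def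
  set eC := Sᶜ.orderEmbOfFin hcomp with heC_def
  set e : Fin n → Fin n := fun r =>
    if h : (r : ℕ) < s then eS ⟨r, h⟩
    else eC ⟨(r : ℕ) - s, by have := r.isLt; omega⟩ with he_def
  have he_lt : ∀ (r : Fin n) (h : (r : ℕ) < s), e r = eS ⟨r, h⟩ := by
    intro r h; simp [he_def, h]
  have he_ge : ∀ (r : Fin n) (h : ¬ (r : ℕ) < s),
      e r = eC ⟨(r : ℕ) - s, by have := r.isLt; omega⟩ := by
    intro r h; simp [he_def, h]
  have hmemS : ∀ (r : Fin n), (r : ℕ) < s → e r ∈ S := by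
    intro r h; rw [he_lt r h]; exact Finset.orderEmbOfFin_mem _ _ _
  have hmemC : ∀ (r : Fin n), ¬ (r : ℕ) < s → e r ∉ S := by
    intro r h
    rw [he_ge r h]
    have := Finset.orderEmbOfFin_mem Sᶜ hcomp ⟨(r : ℕ) - s, by have := r.isLt; omega⟩
    exact fun hc => (Finset.mem_compl.1 this) hc
  have hkey : ∀ r r' : Fin n, D.galoisEdge (e r) (e r') → (r' : ℕ) < (r : ℕ) := by
    intro r r' hedge
    have hlt : e r' < e r := Fin.lt_def.2 (edge_lt hedge)
    by_cases hr : (r : ℕ) < s <;> by_cases hr' : (r' : ℕ) < s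
    · rw [he_lt r hr, he_lt r' hr'] at hlt
      exact eS.lt_iff_lt.1 hlt
    · exact absurd (hS (e r) (hmemS r hr) (e r') hedge) (hmemC r' hr')
    · omega
    · rw [he_ge r hr, he_ge r' hr'] at hlt
      have := eC.lt_iff_lt.1 hlt
      rw [Fin.lt_def] at this
      simp only at this
      omega
  have hinj : Function.Injective e := by
    intro r r' hrr
    by_cases hr : (r : ℕ) < s <;> by_cases hr' : (r' : ℕ) < s
    · rw [he_lt r hr, he_lt r' hr'] at hrr
      have h2 := eS.injective hrr
      rw [Fin.mk.injEq] at h2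
      exact Fin.ext h2
    · exact absurd (hrr ▸ hmemS r hr) (hmemC r' hr')
    · exact absurd (hrr.symm ▸ hmemS r' hr') (hmemC r hr)
    · rw [he_ge r hr, he_ge r' hr'] at hrr
      have := congrArg Fin.val (eC.injective hrr)
      simp only at this
      exact Fin.ext (by omega)
  have hsurj : Function.Surjective e := Finite.injective_iff_surjective.1 hinj
  set A : Fin (n + 1) → Finset (Fin n) :=
    fun t => (univ.filter fun r : Fin n => (r : ℕ) < (t : ℕ)).image e with hA_def
  have hAlower : ∀ t, D.LowerE (A t) := by
    intro t i hi k hedge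
    simp only [hA_def, Finset.mem_image, Finset.mem_filter, Finset.mem_univ, true_and] at hi ⊢
    obtain ⟨r, hr, rfl⟩ := hi
    obtain ⟨r', rfl⟩ := hsurj k
    exact ⟨r', lt_trans (hkey r r' hedge) hr, rfl⟩
  have hmono : StrictMono (fun t => D.psi (A t)) := by
    rw [Fin.strictMono_iff_lt_succ]
    intro t
    refine psi_strictMonoOn (hAlower _) (hAlower _) ?_
    constructor
    · refine Finset.image_subset_image fun r hr => ?_
      simp only [Finset.mem_filter, Finset.mem_univ, true_and, Fin.coe_castSucc,
        Fin.val_succ] at hr ⊢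
      omega
    · intro hsub
      have : e ⟨(t : ℕ), t.isLt⟩ ∈ A t.succ := by
        simp only [hA_def, Finset.mem_image, Finset.mem_filter, Finset.mem_univ, true_and]
        exact ⟨⟨(t : ℕ), t.isLt⟩, by simp, rfl⟩
      have h2 := hsub this
      simp only [hA_def, Finset.mem_image, Finset.mem_filter, Finset.mem_univ, true_and] at h2
      obtain ⟨r', hr', hrr⟩ := h2
      have := hinj hrr
      rw [this] at hr'
      simp at hr'
  have hAs : A ⟨s, by omega⟩ = S := by
    ext x
    simp only [hA_def, Finset.mem_image, Finset.mem_filter, Finset.mem_univ, true_and]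
    constructor
    · rintro ⟨r, hr, rfl⟩
      exact hmemS r hr
    · intro hx
      have : x ∈ Set.range eS := by rw [heS_def, Finset.range_orderEmbOfFin]; exact hx
      obtain ⟨q, hq⟩ := this
      refine ⟨⟨(q : ℕ), lt_of_lt_of_le q.isLt hsn⟩, q.isLt, ?_⟩
      rw [he_lt _ q.isLt]
      rw [← hq]
  exact ⟨fun t => D.psi (A t), hmono, ⟨s, by omega⟩, congrArg D.psi hAs⟩

lemma fin_le_of_strictMono {f : Fin (n + 1) → ℕ} (hf : StrictMono f) :
    ∀ i : Fin (n + 1), (i : ℕ) ≤ f i := by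
  intro i
  induction i using Fin.induction with
  | zero => exact Nat.zero_le _
  | succ i ih =>
    have h1 := hf (Fin.castSucc_lt_succ : i.castSucc < i.succ)
    have h2 : ((i.castSucc : Fin (n + 1)) : ℕ) = (i : ℕ) := rfl
    simp only [Fin.val_succ]
    omega

lemma spine_union_eq_univ {D : ExtremalChainData L n} {a : L} (ha : a ∈ spine L n) :
    D.Jf a ∪ D.Mf a = univ := by
  obtain ⟨c, hc, i₀, rfl⟩ := ha
  have hJ : StrictMono fun t => (D.Jf (c t)).card := by
    intro t t' htt
    refine Finset.card_lt_card ⟨le_iff_Jf.1 (hc htt).le, fun hsub => ?_⟩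
    exact absurd (hc htt) (le_iff_Jf.2 hsub).not_gt
  have hM : StrictMono fun t : Fin (n + 1) => (D.Mf (c t.rev)).card := by
    intro t t' htt
    have hrev : t'.rev < t.rev := by rwa [Fin.rev_lt_rev]
    have hcc : c t'.rev < c t.rev := hc hrev
    refine Finset.card_lt_card
      ⟨fun x hx => mem_Mf.2 (hcc.le.trans (mem_Mf.1 hx)), fun hsub => ?_⟩
    have h1 : c t.rev ≤ c t'.rev := by
      rw [← D.inf_Mf (c t.rev), ← D.inf_Mf (c t'.rev)]
      exact Finset.inf_mono hsub
    exact absurd hcc h1.not_gt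
  have h1 : (i₀ : ℕ) ≤ (D.Jf (c i₀)).card := fin_le_of_strictMono hJ i₀
  have h2 : (i₀.rev : ℕ) ≤ (D.Mf (c i₀.rev.rev)).card := fin_le_of_strictMono hM i₀.rev
  rw [Fin.rev_rev] at h2
  have hrev : (i₀.rev : ℕ) = n - (i₀ : ℕ) := by
    have := i₀.isLt
    rw [Fin.val_rev]
    omega
  have hcard : (D.Jf (c i₀) ∪ D.Mf (c i₀)).card
      = (D.Jf (c i₀)).card + (D.Mf (c i₀)).card :=
    Finset.card_union_of_disjoint (D.disjoint_Jf_Mf _)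
  apply Finset.eq_univ_of_card
  have hle : (D.Jf (c i₀) ∪ D.Mf (c i₀)).card ≤ n := by
    simpa using Finset.card_le_univ (D.Jf (c i₀) ∪ D.Mf (c i₀))
  have hi : (i₀ : ℕ) ≤ n := by omega
  simp only [Fintype.card_fin]
  omega

lemma spine_j_or_m {D : ExtremalChainData L n} {a : L} (ha : a ∈ spine L n) (k : Fin n) :
    D.j k ≤ a ∨ a ≤ D.m k := by
  have h := spine_union_eq_univ (D := D) ha
  have hk : k ∈ D.Jf a ∪ D.Mf a := h ▸ Finset.mem_univ k
  rcases Finset.mem_union.1 hk with h' | h'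
  exacts [Or.inl (mem_Jf.1 h'), Or.inr (mem_Mf.1 h')]

lemma spine_lowerE {D : ExtremalChainData L n} {a : L} (ha : a ∈ spine L n) :
    D.LowerE (D.Jf a) := by
  intro i hi k hedge
  rcases spine_j_or_m ha k with h | h
  · exact mem_Jf.2 h
  · exact absurd ((mem_Jf.1 hi).trans h) hedge.1

lemma lowerE_isGalois {D : ExtremalChainData L n} {S : Finset (Fin n)}
    (hS : D.LowerE S) : IsGaloisLowerSet D ↑S := by
  intro i hi k hik
  induction hik with
  | single h => exact hS i hi _ h
  | tail _ h ih => exact hS _ ih _ h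

lemma isGalois_lowerE {D : ExtremalChainData L n} {S : Set (Fin n)}
    (hS : IsGaloisLowerSet D S) : D.LowerE S.toFinset := by
  intro i hi k h
  rw [Set.mem_toFinset] at *
  exact hS i hi k (Relation.TransGen.single h)

end ExtremalChainData

/-- The spine of an extremal lattice is a sublattice (closed under join and
meet) and is a distributive lattice, namely it is order-isomorphic to the
lattice of order ideals of the Galois poset `P(L)` ordered by inclusion. -/
theorem spine_sublattice_iso_ideals {L : Type*} [Lattice L] [Fintype L]
    [BoundedOrder L] {n : ℕ} (D : ExtremalChainData L n) :
    (∀ a b : L, a ∈ spine L n → b ∈ spine L n →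
      a ⊔ b ∈ spine L n ∧ a ⊓ b ∈ spine L n) ∧
    Nonempty ({a : L // a ∈ spine L n} ≃o {S : Set (Fin n) // IsGaloisLowerSet D S}) := by
  classical
  constructor
  · intro a b ha hb
    constructor
    · have hU : D.LowerE (D.Jf a ∪ D.Jf b) := by
        intro i hi k h
        rcases Finset.mem_union.1 hi with h' | h'
        · exact Finset.mem_union_left _ (spine_lowerE ha i h' k h)
        · exact Finset.mem_union_right _ (spine_lowerE hb i h' k h)
      have heq : a ⊔ b = D.psi (D.Jf a ∪ D.Jf b) := by
        refine le_antisymm ?_ (Finset.sup_le fun i hi => ?_)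
        · refine sup_le ?_ ?_
          · conv_lhs => rw [← D.psi_Jf a]
            exact Finset.sup_mono Finset.subset_union_left
          · conv_lhs => rw [← D.psi_Jf b]
            exact Finset.sup_mono Finset.subset_union_right
        · rcases Finset.mem_union.1 hi with h' | h'
          · exact (mem_Jf.1 h').trans le_sup_left
          · exact (mem_Jf.1 h').trans le_sup_right
      rw [heq]; exact psi_mem_spine hU
    · have hI : D.LowerE (D.Jf (a ⊓ b)) := by
        intro i hi k h
        have hia := spine_lowerE ha i (mem_Jf.2 ((mem_Jf.1 hi).trans inf_le_left)) k h
        have hib := spine_lowerE hb i (mem_Jf.2 ((mem_Jf.1 hi).trans inf_le_right)) k h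
        exact mem_Jf.2 (le_inf (mem_Jf.1 hia) (mem_Jf.1 hib))
      have heq : a ⊓ b = D.psi (D.Jf (a ⊓ b)) := (D.psi_Jf _).symm
      rw [heq]; exact psi_mem_spine hI
  · refine ⟨{
      toFun := fun a => ⟨(↑(D.Jf a.1) : Set (Fin n)), lowerE_isGalois (spine_lowerE a.2)⟩
      invFun := fun S => ⟨D.psi S.1.toFinset, psi_mem_spine (isGalois_lowerE S.2)⟩
      left_inv := ?_
      right_inv := ?_
      map_rel_iff' := ?_ }⟩
    · intro a
      apply Subtype.ext
      dsimp only
      refine Eq.trans (congrArg D.psi ?_) (D.psi_Jf a.1)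
      ext x
      simp [Set.mem_toFinset]
    · intro S
      apply Subtype.ext
      dsimp only
      rw [Jf_psi (isGalois_lowerE S.2)]
      exact Set.coe_toFinset _
    · intro a b
      simp only [Equiv.coe_fn_mk, Subtype.mk_le_mk, Set.le_iff_subset, Finset.coe_subset]
      rw [← Subtype.coe_le_coe]
      exact le_iff_Jf.symm
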